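/- arXiv:1011.4263 — 3 statements merged into one kernel-verified Lean document; each statement's English description precedes it below -/
import Mathlib

section
/- If (Q_n) is a sequence of perfect subsets of Cantor space with Q_{n+1} ⊆_{n+1} Q_n for all n ∈ ℕ, then Q = ⋂_n Q_n is a perfect set and Q ⊆_n Q_n for each n (the fusion property of the orders ⊆_n). -/
noncomputable section
open scoped Classical

/-- A perfect subset of Cantor space (perfect and nonempty). -/
def PerfectSet (C : Set (ℕ → Bool)) : Prop := Perfect C ∧ C.Nonempty

/-- `l` is a node of the tree `T_Q` of the set `Q ⊆ 2^ℕ`. -/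
def InTree (Q : Set (ℕ → Bool)) (l : List Bool) : Prop :=
  ∃ x ∈ Q, ∀ i : Fin l.length, l.get i = x i

/-- `l` is a splitting (ramification) node of `T_Q`. -/
def SplitNode (Q : Set (ℕ → Bool)) (l : List Bool) : Prop :=
  InTree Q (l ++ [false]) ∧ InTree Q (l ++ [true])

/-- The first splitting node of `T_Q` extending `t` (junk value `t` if none exists). -/
noncomputable def firstSplit (Q : Set (ℕ → Bool)) (t : List Bool) : List Bool :=
  if h : ∃ l, t <+: l ∧ SplitNode Q l ∧
      ∀ l', t <+: l' → SplitNode Q l' → l.length ≤ l'.length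
  then h.choose else t

/-- Auxiliary: the canonical node `u(Q)`, with `u` given in reverse. -/
noncomputable def canonNodeRev (Q : Set (ℕ → Bool)) : List Bool → List Bool
  | [] => []
  | i :: u => firstSplit Q (canonNodeRev Q u) ++ [i]

/-- The canonical node `u(Q)` of the tree `T_Q`. -/
noncomputable def canonNode (Q : Set (ℕ → Bool)) (u : List Bool) : List Bool :=
  canonNodeRev Q u.reverse

/-- The canonical piece `Q(u) = Q ∩ [u(Q)]`. -/
noncomputable def piece (Q : Set (ℕ → Bool)) (u : List Bool) : Set (ℕ → Bool) :=
  {x ∈ Q | ∀ i : Fin (canonNode Q u).length, (canonNode Q u).get i = x i}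

/-- `S ⊆_n Q` : `S(u) ⊆ Q(u)` for every binary string `u` of length `n`. -/
def subWithin (n : ℕ) (S Q : Set (ℕ → Bool)) : Prop :=
  ∀ u : List Bool, u.length = n → piece S u ⊆ piece Q u

-- AUX
def ExtBy (l : List Bool) (x : ℕ → Bool) : Prop := ∀ i : Fin l.length, l.get i = x i

def res (x : ℕ → Bool) (n : ℕ) : List Bool := List.ofFn fun i : Fin n => x i

@[simp] lemma res_length (x : ℕ → Bool) (n : ℕ) : (res x n).length = n :=
  List.length_ofFn

lemma res_get (x : ℕ → Bool) (n : ℕ) (i : Fin (res x n).length) :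
    (res x n).get i = x i := by
  rw [List.get_eq_getElem]
  simp [res, List.getElem_ofFn]

lemma extb_iff {l : List Bool} {x : ℕ → Bool} : ExtBy l x ↔ l = res x l.length := by
  constructor
  · intro h
    apply List.ext_get (by simp)
    intro i h1 h2
    rw [res_get]; exact h ⟨i, h1⟩
  · intro h i
    have hi : (i : ℕ) < (res x l.length).length := by simpa using i.isLt
    have e : l.get i = (res x l.length).get ⟨i, hi⟩ := by
      simp only [List.get_eq_getElem]
      exact List.getElem_of_eq h _
    rw [e, res_get]

lemma extb_res (x : ℕ → Bool) (n : ℕ) : ExtBy (res x n) x := by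
  rw [extb_iff, res_length]

lemma res_take (x : ℕ → Bool) {a b : ℕ} (h : a ≤ b) : (res x b).take a = res x a := by
  apply List.ext_get (by simp [h])
  intro i h1 h2
  have hib : i < b := lt_of_lt_of_le (by simpa [h] using h1) h
  have e : (List.take a (res x b)).get ⟨i, h1⟩ = (res x b).get ⟨i, by simpa using hib⟩ := by
    simp only [List.get_eq_getElem, List.getElem_take]
  rw [e, res_get, res_get]

lemma res_prefix (x : ℕ → Bool) {a b : ℕ} (h : a ≤ b) : res x a <+: res x b := by
  rw [List.prefix_iff_eq_take, res_length, res_take x h]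

lemma extb_of_prefix {l m : List Bool} {x : ℕ → Bool} (h : l <+: m) (hm : ExtBy m x) :
    ExtBy l x := by
  rw [extb_iff] at hm ⊢
  calc l = (res x m.length).take l.length := by
        rw [← hm]; exact List.prefix_iff_eq_take.mp h
    _ = res x l.length := res_take x h.length_le

lemma extb_comparable {l m : List Bool} {x : ℕ → Bool} (hl : ExtBy l x) (hm : ExtBy m x)
    (h : l.length ≤ m.length) : l <+: m := by
  rw [extb_iff] at hl hm
  rw [hl, hm]; exact res_prefix x h

lemma res_snoc (x : ℕ → Bool) (n : ℕ) : res x (n+1) = res x n ++ [x n] := by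
  rw [res, res, List.ofFn_succ', List.concat_eq_append]
  congr 1

lemma extb_snoc_iff {l : List Bool} {b : Bool} {x : ℕ → Bool} :
    ExtBy (l ++ [b]) x ↔ ExtBy l x ∧ b = x l.length := by
  rw [extb_iff, extb_iff]
  simp only [List.length_append, List.length_singleton, res_snoc]
  constructor
  · intro h
    have := List.append_inj h (by simp)
    exact ⟨this.1, by simpa using this.2⟩
  · rintro ⟨h1, h2⟩; rw [← h1, ← h2]

lemma inTree_iff {Q : Set (ℕ → Bool)} {l : List Bool} :
    InTree Q l ↔ ∃ x ∈ Q, ExtBy l x := Iff.rfl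

lemma inTree_of_prefix {Q : Set (ℕ → Bool)} {l m : List Bool} (h : l <+: m)
    (hm : InTree Q m) : InTree Q l := by
  obtain ⟨x, hx, hext⟩ := hm
  exact ⟨x, hx, extb_of_prefix h hext⟩

lemma inTree_mono {S Q : Set (ℕ → Bool)} (h : S ⊆ Q) {l : List Bool} :
    InTree S l → InTree Q l := fun ⟨x, hx, he⟩ => ⟨x, h hx, he⟩

lemma splitNode_mono {S Q : Set (ℕ → Bool)} (h : S ⊆ Q) {l : List Bool} :
    SplitNode S l → SplitNode Q l := fun ⟨a, b⟩ => ⟨inTree_mono h a, inTree_mono h b⟩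

def cyl (l : List Bool) : Set (ℕ → Bool) := {x | ExtBy l x}

lemma cyl_open (l : List Bool) : IsOpen (cyl l) := by
  have : cyl l = ⋂ i : Fin l.length, (fun x : ℕ → Bool => x (i : ℕ)) ⁻¹' {l.get i} := by
    ext x
    simp only [cyl, Set.mem_setOf_eq, Set.mem_iInter, Set.mem_preimage, Set.mem_singleton_iff]
    exact ⟨fun h i => (h i).symm, fun h i => (h i).symm⟩
  rw [this]
  exact isOpen_iInter_of_finite fun i =>
    (continuous_apply (i : ℕ)).isOpen_preimage _ (isOpen_discrete _)

lemma cyl_closed (l : List Bool) : IsClosed (cyl l) := by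
  have : cyl l = ⋂ i : Fin l.length, (fun x : ℕ → Bool => x (i : ℕ)) ⁻¹' {l.get i} := by
    ext x
    simp only [cyl, Set.mem_setOf_eq, Set.mem_iInter, Set.mem_preimage, Set.mem_singleton_iff]
    exact ⟨fun h i => (h i).symm, fun h i => (h i).symm⟩
  rw [this]
  exact isClosed_iInter fun i =>
    IsClosed.preimage (continuous_apply (i : ℕ)) (isClosed_discrete _)

/-- The condition under which `firstSplit` is meaningful. -/
def FsCond (Q : Set (ℕ → Bool)) (t : List Bool) : Prop :=
  ∃ l, t <+: l ∧ SplitNode Q l ∧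
      ∀ l', t <+: l' → SplitNode Q l' → l.length ≤ l'.length

lemma firstSplit_spec {Q : Set (ℕ → Bool)} {t : List Bool} (h : FsCond Q t) :
    t <+: firstSplit Q t ∧ SplitNode Q (firstSplit Q t) ∧
      ∀ l', t <+: l' → SplitNode Q l' → (firstSplit Q t).length ≤ l'.length := by
  have h' : ∃ l, t <+: l ∧ SplitNode Q l ∧
      ∀ l', t <+: l' → SplitNode Q l' → l.length ≤ l'.length := h
  rw [firstSplit, dif_pos h']
  exact h'.choose_spec

lemma fsCond_of_exists {Q : Set (ℕ → Bool)} {t : List Bool}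
    (h : ∃ l, t <+: l ∧ SplitNode Q l) : FsCond Q t := by
  have hP : ∃ n, ∃ l : List Bool, l.length = n ∧ t <+: l ∧ SplitNode Q l := by
    obtain ⟨l, h1, h2⟩ := h
    exact ⟨l.length, l, rfl, h1, h2⟩
  obtain ⟨l, hl, h1, h2⟩ := Nat.find_spec hP
  refine ⟨l, h1, h2, fun l' h1' h2' => ?_⟩
  rw [hl]
  exact Nat.find_min' hP ⟨l', rfl, h1', h2'⟩

lemma split_exists {C : Set (ℕ → Bool)} (hC : Perfect C) {t : List Bool}
    (ht : InTree C t) : FsCond C t := by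
  apply fsCond_of_exists
  obtain ⟨x, hx, htx⟩ := ht
  have hacc := accPt_iff_nhds.mp (hC.acc x hx)
  obtain ⟨y, ⟨hyc, hyC⟩, hyx⟩ := hacc (cyl t) ((cyl_open t).mem_nhds htx)
  have hty : ExtBy t y := hyc
  have hne : ∃ k, x k ≠ y k := Function.ne_iff.mp (Ne.symm hyx)
  set k := Nat.find hne with hk
  have hxk : x k ≠ y k := Nat.find_spec hne
  have hag : ∀ j, j < k → x j = y j := fun j hj => by
    by_contra hc
    exact absurd (Nat.find_min' hne hc) (by omega)
  have htk : t.length ≤ k := by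
    by_contra hc
    push_neg at hc
    exact hxk (by rw [← htx ⟨k, hc⟩, ← hty ⟨k, hc⟩])
  refine ⟨res x k, ?_, ?_⟩
  · exact extb_comparable htx (extb_res x k) (by simpa using htk)
  · have h1 : InTree C (res x k ++ [x k]) :=
      ⟨x, hx, extb_snoc_iff.mpr ⟨extb_res x k, by rw [res_length]⟩⟩
    have h2 : InTree C (res x k ++ [y k]) := by
      refine ⟨y, hyC, extb_snoc_iff.mpr ⟨?_, by rw [res_length]⟩⟩
      intro i
      rw [res_get]
      exact hag i (by simpa using i.isLt)
    rcases Bool.eq_false_or_eq_true (x k) with h | h <;>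
      rcases Bool.eq_false_or_eq_true (y k) with h' | h' <;>
        first
          | (exact absurd (h.trans h'.symm) hxk)
          | (rw [h] at h1; rw [h'] at h2; exact ⟨h1, h2⟩)
          | (rw [h] at h1; rw [h'] at h2; exact ⟨h2, h1⟩)

lemma split_of_diverge {Q : Set (ℕ → Bool)} {s : List Bool} (hs : InTree Q s)
    {x : ℕ → Bool} (hx : x ∈ Q) {k : ℕ} (hk : k < s.length)
    (hag : ExtBy (s.take k) x) (hne : s.get ⟨k, hk⟩ ≠ x k) :
    SplitNode Q (s.take k) := by
  have hlen : (s.take k).length = k := by simp [Nat.le_of_lt hk]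
  have h1 : InTree Q (s.take k ++ [s.get ⟨k, hk⟩]) := by
    apply inTree_of_prefix _ hs
    rw [← List.concat_eq_append, List.get_eq_getElem, List.take_concat_get]
    exact List.take_prefix _ _
  have h2 : InTree Q (s.take k ++ [x k]) :=
    ⟨x, hx, extb_snoc_iff.mpr ⟨hag, by rw [hlen]⟩⟩
  rcases Bool.eq_false_or_eq_true (s.get ⟨k, hk⟩) with h | h <;>
    rcases Bool.eq_false_or_eq_true (x k) with h' | h' <;>
      first
        | (exact absurd (h.trans h'.symm) hne)
        | (rw [h] at h1; rw [h'] at h2; exact ⟨h1, h2⟩)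
        | (rw [h] at h1; rw [h'] at h2; exact ⟨h2, h1⟩)

lemma firstSplit_all_through {Q : Set (ℕ → Bool)} {t : List Bool} (h : FsCond Q t)
    {x : ℕ → Bool} (hx : x ∈ Q) (ht : ExtBy t x) : ExtBy (firstSplit Q t) x := by
  obtain ⟨hpre, hsplit, hmin⟩ := firstSplit_spec h
  set s := firstSplit Q t with hsdef
  by_contra hnot
  have hne : ∃ k, ∃ hk : k < s.length, s.get ⟨k, hk⟩ ≠ x k := by
    by_contra hc
    push_neg at hc
    exact hnot fun i => hc i i.isLt
  set k := Nat.find hne with hkdef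
  obtain ⟨hk, hxk⟩ := Nat.find_spec hne
  have hag : ∀ j, (hj : j < s.length) → j < k → s.get ⟨j, hj⟩ = x j := by
    intro j hj hjk
    by_contra hc
    exact absurd (Nat.find_min' hne ⟨hj, hc⟩) (by omega)
  have hagExt : ExtBy (s.take k) x := by
    intro i
    have hik : (i : ℕ) < k := by have h := i.isLt; simp only [List.length_take] at h; omega
    have his : (i : ℕ) < s.length := lt_trans hik hk
    have e : (s.take k).get i = s.get ⟨i, his⟩ := by
      simp only [List.get_eq_getElem, List.getElem_take]
    rw [e]
    exact hag i his hik
  have hsplit' : SplitNode Q (s.take k) :=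
    split_of_diverge (inTree_of_prefix (List.prefix_append _ _) hsplit.1) hx hk hagExt hxk
  have htk : t.length ≤ k := by
    by_contra hc
    push_neg at hc
    have h1 : t.get ⟨k, hc⟩ = s.get ⟨k, hk⟩ := by
      simp only [List.get_eq_getElem]
      exact hpre.getElem hc
    exact hxk (by rw [← h1]; exact ht ⟨k, hc⟩)
  have hpre' : t <+: s.take k := by
    have := List.prefix_iff_eq_take.mp hpre
    rw [List.prefix_iff_eq_take, List.take_take, min_eq_left htk]
    exact this
  have := hmin (s.take k) hpre' hsplit'
  rw [List.length_take] at this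
  omega

lemma firstSplit_unique {Q : Set (ℕ → Bool)} {t s : List Bool}
    (h1 : t <+: s) (h2 : SplitNode Q s)
    (h3 : ∀ l', t <+: l' → SplitNode Q l' → s.length ≤ l'.length) :
    firstSplit Q t = s := by
  have hC : FsCond Q t := ⟨s, h1, h2, h3⟩
  obtain ⟨hpre, hsplit, hmin⟩ := firstSplit_spec hC
  obtain ⟨x, hx, hxe⟩ := h2.1
  have hxs : ExtBy s x := extb_of_prefix (List.prefix_append _ _) hxe
  have hxt : ExtBy t x := extb_of_prefix h1 hxs
  have hxf : ExtBy (firstSplit Q t) x := firstSplit_all_through hC hx hxt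
  have hle : (firstSplit Q t).length ≤ s.length := hmin s h1 h2
  have hge : s.length ≤ (firstSplit Q t).length := h3 _ hpre hsplit
  exact List.IsPrefix.eq_of_length (extb_comparable hxf hxs hle) (le_antisymm hle hge)

-- canonical node layer
lemma cnr_cons (Q : Set (ℕ → Bool)) (i : Bool) (v : List Bool) :
    canonNodeRev Q (i :: v) = firstSplit Q (canonNodeRev Q v) ++ [i] := rfl

/-- Everything we need about the canonical nodes of the tree of `Q`. -/
def TreeOK (Q : Set (ℕ → Bool)) : Prop :=
  ∀ v : List Bool, InTree Q (canonNodeRev Q v) ∧ FsCond Q (canonNodeRev Q v)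

lemma treeOK_of_perfect {Q : Set (ℕ → Bool)} (h : PerfectSet Q) : TreeOK Q := by
  have key : ∀ v : List Bool, InTree Q (canonNodeRev Q v) := by
    intro v
    induction v with
    | nil =>
      obtain ⟨x, hx⟩ := h.2
      exact ⟨x, hx, fun i => absurd i.isLt (by simp [canonNodeRev])⟩
    | cons i v ih =>
      have hfs := firstSplit_spec (split_exists h.1 ih)
      rw [cnr_cons]
      cases i
      · exact hfs.2.1.1
      · exact hfs.2.1.2
  exact fun v => ⟨key v, split_exists h.1 (key v)⟩

lemma cnr_prefix_fs {Q : Set (ℕ → Bool)} (hQ : TreeOK Q) (v : List Bool) :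
    canonNodeRev Q v <+: firstSplit Q (canonNodeRev Q v) :=
  (firstSplit_spec (hQ v).2).1

lemma cnr_prefix_cons {Q : Set (ℕ → Bool)} (hQ : TreeOK Q) (i : Bool) (v : List Bool) :
    canonNodeRev Q v <+: canonNodeRev Q (i :: v) := by
  rw [cnr_cons]
  exact (cnr_prefix_fs hQ v).trans (List.prefix_append _ _)

lemma cnr_length {Q : Set (ℕ → Bool)} (hQ : TreeOK Q) (v : List Bool) :
    v.length ≤ (canonNodeRev Q v).length := by
  induction v with
  | nil => simp
  | cons i v ih =>
    rw [cnr_cons, List.length_append]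
    have := (cnr_prefix_fs hQ v).length_le
    simp only [List.length_cons, List.length_singleton]
    omega

lemma cnr_cover {Q : Set (ℕ → Bool)} (hQ : TreeOK Q) {x : ℕ → Bool} (hx : x ∈ Q) :
    ∀ n, ∃ v : List Bool, v.length = n ∧ ExtBy (canonNodeRev Q v) x := by
  intro n
  induction n with
  | zero => exact ⟨[], rfl, fun i => absurd i.isLt (by simp [canonNodeRev])⟩
  | succ n ih =>
    obtain ⟨v, hv, hext⟩ := ih
    have hthr : ExtBy (firstSplit Q (canonNodeRev Q v)) x :=
      firstSplit_all_through (hQ v).2 hx hext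
    refine ⟨x (firstSplit Q (canonNodeRev Q v)).length :: v, by simp [hv], ?_⟩
    rw [cnr_cons]
    exact extb_snoc_iff.mpr ⟨hthr, rfl⟩

-- pieces, reversed
def pieceR (Q : Set (ℕ → Bool)) (v : List Bool) : Set (ℕ → Bool) :=
  {x ∈ Q | ExtBy (canonNodeRev Q v) x}

lemma piece_eq_pieceR (Q : Set (ℕ → Bool)) (u : List Bool) :
    piece Q u = pieceR Q u.reverse := rfl

lemma pieceR_eq_piece (Q : Set (ℕ → Bool)) (v : List Bool) :
    pieceR Q v = piece Q v.reverse := by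
  rw [piece_eq_pieceR, List.reverse_reverse]

def subR (n : ℕ) (S Q : Set (ℕ → Bool)) : Prop :=
  ∀ v : List Bool, v.length = n → pieceR S v ⊆ pieceR Q v

lemma subWithin_iff_subR {n : ℕ} {S Q : Set (ℕ → Bool)} :
    subWithin n S Q ↔ subR n S Q := by
  constructor
  · intro h v hv
    rw [pieceR_eq_piece, pieceR_eq_piece]
    exact h v.reverse (by simpa using hv)
  · intro h u hu
    rw [piece_eq_pieceR, piece_eq_pieceR]
    exact h u.reverse (by simpa using hu)

lemma pieceR_nonempty {Q : Set (ℕ → Bool)} (hQ : TreeOK Q) (v : List Bool) :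
    (pieceR Q v).Nonempty := by
  obtain ⟨x, hx, hext⟩ := (hQ v).1
  exact ⟨x, hx, hext⟩

lemma subR_zero {S Q : Set (ℕ → Bool)} : subR 0 S Q ↔ S ⊆ Q := by
  have hnil : ∀ (R : Set (ℕ → Bool)), pieceR R [] = R := by
    intro R
    ext x
    simp only [pieceR, Set.mem_setOf_eq, and_iff_left_iff_imp]
    intro _ i
    exact absurd i.isLt (by simp [canonNodeRev])
  constructor
  · intro h
    have := h [] rfl
    rwa [hnil, hnil] at this
  · intro h v hv
    rw [List.length_eq_zero_iff] at hv
    subst hv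
    rw [hnil, hnil]
    exact h

lemma subR_weaken_succ {S Q : Set (ℕ → Bool)} (hS : TreeOK S) (hQ : TreeOK Q)
    {n : ℕ} (h : subR (n + 1) S Q) : subR n S Q := by
  intro v hv x hx
  obtain ⟨hxS, hxe⟩ := hx
  have hthr : ExtBy (firstSplit S (canonNodeRev S v)) x :=
    firstSplit_all_through (hS v).2 hxS hxe
  set i := x (firstSplit S (canonNodeRev S v)).length with hi
  have hxmem : x ∈ pieceR S (i :: v) := by
    refine ⟨hxS, ?_⟩
    rw [cnr_cons]
    exact extb_snoc_iff.mpr ⟨hthr, rfl⟩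
  have := h (i :: v) (by simp [hv]) hxmem
  obtain ⟨hxQ, hxq⟩ := this
  exact ⟨hxQ, extb_of_prefix (cnr_prefix_cons hQ i v) hxq⟩

lemma subR_weaken {S Q : Set (ℕ → Bool)} (hS : TreeOK S) (hQ : TreeOK Q)
    {m n : ℕ} (hmn : m ≤ n) (h : subR n S Q) : subR m S Q := by
  induction n with
  | zero => rwa [Nat.le_zero.mp hmn]
  | succ n ih =>
    rcases Nat.lt_or_ge m (n + 1) with hlt | hge
    · exact ih (by omega) (subR_weaken_succ hS hQ h)
    · rwa [le_antisymm hmn hge]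

lemma not_lt_of_doubleext {a b : List Bool} {x0 x1 : ℕ → Bool}
    (h0a : ExtBy (a ++ [false]) x0) (h0b : ExtBy (b ++ [false]) x0)
    (h1a : ExtBy (a ++ [true]) x1) (h1b : ExtBy (b ++ [true]) x1) :
    ¬ a.length < b.length := by
  intro hlt
  have key : ∀ c : Bool, ∀ x : ℕ → Bool, ExtBy (a ++ [c]) x → ExtBy (b ++ [c]) x →
      a ++ [c] = (b ++ [c]).take (a.length + 1) := by
    intro c x hax hbx
    have hpre : a ++ [c] <+: b ++ [c] :=
      extb_comparable hax hbx (by simp; omega)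
    have := List.prefix_iff_eq_take.mp hpre
    simpa using this
  have h0 := key false x0 h0a h0b
  have h1 := key true x1 h1a h1b
  rw [List.take_append_of_le_length hlt] at h0 h1
  have : a ++ [false] = a ++ [true] := by rw [h0, h1]
  simpa using this

lemma fs_eq_of_doubleext {a b : List Bool} {x0 x1 : ℕ → Bool}
    (h0a : ExtBy (a ++ [false]) x0) (h0b : ExtBy (b ++ [false]) x0)
    (h1a : ExtBy (a ++ [true]) x1) (h1b : ExtBy (b ++ [true]) x1) :
    a = b := by
  have hab := not_lt_of_doubleext h0a h0b h1a h1b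
  have hba := not_lt_of_doubleext h0b h0a h1b h1a
  have hlen : a.length = b.length := by omega
  have hpre : a ++ [false] <+: b ++ [false] :=
    extb_comparable h0a h0b (by simp [hlen])
  have := hpre.eq_of_length (by simp [hlen])
  simpa using this

/-- Canonical nodes agree up to level `n` when `S ⊆ₙ Q`. -/
lemma cnr_eq_of_subR {S Q : Set (ℕ → Bool)} (hS : TreeOK S) (hQ : TreeOK Q)
    {n : ℕ} (h : subR n S Q) :
    ∀ v : List Bool, v.length ≤ n → canonNodeRev S v = canonNodeRev Q v := by
  intro v
  induction v with
  | nil => intro _; rfl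
  | cons i v ih =>
    intro hlen
    have hvn : v.length ≤ n := by simp at hlen; omega
    have hc := ih hvn
    have hsubsucc : subR (v.length + 1) S Q :=
      subR_weaken hS hQ (by simpa using hlen) h
    obtain ⟨y0, hy0⟩ := pieceR_nonempty hS (false :: v)
    obtain ⟨y1, hy1⟩ := pieceR_nonempty hS (true :: v)
    have hy0Q := hsubsucc (false :: v) (by simp) hy0
    have hy1Q := hsubsucc (true :: v) (by simp) hy1
    rw [cnr_cons, cnr_cons, hc]
    congr 1
    have e0a : ExtBy (firstSplit S (canonNodeRev S v) ++ [false]) y0 := hy0.2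
    have e0b : ExtBy (firstSplit Q (canonNodeRev Q v) ++ [false]) y0 := hy0Q.2
    have e1a : ExtBy (firstSplit S (canonNodeRev S v) ++ [true]) y1 := hy1.2
    have e1b : ExtBy (firstSplit Q (canonNodeRev Q v) ++ [true]) y1 := hy1Q.2
    rw [hc] at e0a e1a
    exact fs_eq_of_doubleext e0a e0b e1a e1b

lemma exists_cyl_subset {x : ℕ → Bool} {U : Set (ℕ → Bool)} (hU : U ∈ nhds x) :
    ∃ k, ∀ y : ℕ → Bool, (∀ j < k, x j = y j) → y ∈ U := by
  rw [nhds_pi, Filter.mem_pi] at hU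
  obtain ⟨I, hIfin, t, ht, hsub⟩ := hU
  obtain ⟨k, hk⟩ := hIfin.bddAbove
  refine ⟨k + 1, fun y hy => hsub ?_⟩
  intro i hi
  have : y i = x i := (hy i (by have := hk hi; omega)).symm
  rw [this]
  exact mem_of_mem_nhds (ht i)


/-- Fusion property: if `Q_{n+1} ⊆_{n+1} Q_n` for all `n`, then `Q = ⋂_n Q_n`
is perfect and `Q ⊆_n Q_n` for each `n`. -/
theorem stmt1 (Q : ℕ → Set (ℕ → Bool)) (hperf : ∀ n, PerfectSet (Q n))
    (hsub : ∀ n, subWithin (n + 1) (Q (n + 1)) (Q n)) :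
    PerfectSet (⋂ n, Q n) ∧ ∀ n, subWithin n (⋂ m, Q m) (Q n) := by
  have hT : ∀ n, TreeOK (Q n) := fun n => treeOK_of_perfect (hperf n)
  have hsubR : ∀ n, subR (n + 1) (Q (n + 1)) (Q n) := fun n => subWithin_iff_subR.mp (hsub n)
  have chain : ∀ n m, n ≤ m → subR n (Q m) (Q n) := by
    intro n m hnm
    induction m with
    | zero =>
      have hn : n = 0 := by omega
      subst hn
      exact fun v hv => subset_rfl
    | succ m ih =>
      rcases Nat.lt_or_ge n (m + 1) with hlt | hge
      · have h1 : subR n (Q (m + 1)) (Q m) :=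
          subR_weaken (hT _) (hT _) (by omega) (hsubR m)
        have h2 : subR n (Q m) (Q n) := ih (by omega)
        exact fun v hv => (h1 v hv).trans (h2 v hv)
      · have hn : n = m + 1 := le_antisymm hnm hge
        subst hn
        exact fun v hv => subset_rfl
  have hsubset : ∀ n m, n ≤ m → Q m ⊆ Q n := fun n m h =>
    subR_zero.mp (subR_weaken (hT m) (hT n) (Nat.zero_le n) (chain n m h))
  set P := ⋂ m, Q m with hPdef
  have hPsub : ∀ n, P ⊆ Q n := fun n => Set.iInter_subset _ n
  set c : List Bool → List Bool := fun v => canonNodeRev (Q v.length) v with hcdef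
  have F1 : ∀ (v : List Bool) (m : ℕ), v.length ≤ m → canonNodeRev (Q m) v = c v :=
    fun v m hm => cnr_eq_of_subR (hT m) (hT v.length) (chain v.length m hm) v le_rfl
  have F2 : ∀ v : List Bool, (P ∩ cyl (c v)).Nonempty := by
    intro v
    set n := v.length with hn
    set T : ℕ → Set (ℕ → Bool) := fun j => Q (n + j) ∩ cyl (c v) with hTdef
    have hnested : ∀ j, T (j + 1) ⊆ T j := fun j =>
      Set.inter_subset_inter_left _ (hsubset (n + j) (n + (j + 1)) (by omega))
    have hne : ∀ j, (T j).Nonempty := by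
      intro j
      obtain ⟨x, hx, hext⟩ := (hT (n + j) v).1
      rw [F1 v (n + j) (by omega)] at hext
      exact ⟨x, hx, hext⟩
    have hclosed : ∀ j, IsClosed (T j) := fun j =>
      ((hperf _).1.closed).inter (cyl_closed _)
    have hinter := IsCompact.nonempty_iInter_of_sequence_nonempty_isCompact_isClosed
      T hnested hne ((hclosed 0).isCompact) hclosed
    obtain ⟨x, hx⟩ := hinter
    rw [Set.mem_iInter] at hx
    refine ⟨x, Set.mem_iInter.mpr fun m => ?_, (hx 0).2⟩
    rcases Nat.lt_or_ge m n with h | h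
    · exact hsubset m n (by omega) (hx 0).1
    · have h2 : x ∈ Q (n + (m - n)) := (hx (m - n)).1
      rwa [Nat.add_sub_cancel' h] at h2
  have c_cons : ∀ (i : Bool) (v : List Bool),
      c (i :: v) = firstSplit (Q v.length) (c v) ++ [i] := by
    intro i v
    have h1 : c (i :: v) = canonNodeRev (Q v.length) (i :: v) :=
      cnr_eq_of_subR (hT _) (hT _) (hsubR v.length) (i :: v) (by simp)
    rw [h1, cnr_cons]
  have fsP : ∀ v : List Bool,
      firstSplit P (c v) = firstSplit (Q v.length) (c v) ∧ FsCond P (c v) := by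
    intro v
    set f := firstSplit (Q v.length) (c v) with hf
    have hspec := firstSplit_spec (hT v.length v).2
    have hpre : c v <+: f := hspec.1
    have hsplitP : SplitNode P f := by
      constructor
      · obtain ⟨x, hx1, hx2⟩ := F2 (false :: v)
        rw [c_cons false v] at hx2
        exact ⟨x, hx1, hx2⟩
      · obtain ⟨x, hx1, hx2⟩ := F2 (true :: v)
        rw [c_cons true v] at hx2
        exact ⟨x, hx1, hx2⟩
    have hmin : ∀ l', c v <+: l' → SplitNode P l' → f.length ≤ l'.length :=
      fun l' h1 h2 => hspec.2.2 l' h1 (splitNode_mono (hPsub v.length) h2)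
    exact ⟨firstSplit_unique hpre hsplitP hmin, ⟨f, hpre, hsplitP, hmin⟩⟩
  have cnrP : ∀ v, canonNodeRev P v = c v := by
    intro v
    induction v with
    | nil => rfl
    | cons i v ih => rw [cnr_cons, ih, (fsP v).1, ← c_cons]
  have hTP : TreeOK P := by
    intro v
    obtain ⟨x, hx1, hx2⟩ := F2 v
    rw [cnrP v]
    exact ⟨⟨x, hx1, hx2⟩, (fsP v).2⟩
  refine ⟨⟨⟨isClosed_iInter fun n => (hperf n).1.closed, ?_⟩, ?_⟩, ?_⟩
  · -- Preperfect
    intro x hx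
    rw [accPt_iff_nhds]
    intro U hU
    obtain ⟨k, hk⟩ := exists_cyl_subset hU
    obtain ⟨v, hv, hext⟩ := cnr_cover hTP hx k
    set f := firstSplit P (canonNodeRev P v) with hf
    have hspec := firstSplit_spec (hTP v).2
    have hthr : ExtBy f x := firstSplit_all_through (hTP v).2 hx hext
    have hother : InTree P (f ++ [!(x f.length)]) := by
      cases hb : x f.length
      · simpa [hb] using hspec.2.1.2
      · simpa [hb] using hspec.2.1.1
    obtain ⟨y, hyP, hye⟩ := hother
    replace hye : ExtBy f y ∧ (!(x f.length)) = y f.length := extb_snoc_iff.mp hye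
    have hkf : k ≤ f.length := by
      rw [hf]
      have h1 := cnr_length hTP v
      have h2 := hspec.1.length_le
      omega
    refine ⟨y, ⟨hk y ?_, hyP⟩, ?_⟩
    · intro j hj
      have hjf : j < f.length := by omega
      calc x j = f.get ⟨j, hjf⟩ := (hthr ⟨j, hjf⟩).symm
        _ = y j := hye.1 ⟨j, hjf⟩
    · intro hxy
      rw [hxy] at hye
      have := hye.2
      simp at this
  · -- nonempty
    obtain ⟨x, hx, -⟩ := F2 []
    exact ⟨x, hx⟩
  · -- subWithin
    intro n
    rw [subWithin_iff_subR]
    intro v hv x hx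
    obtain ⟨hxP, hxe⟩ := hx
    rw [cnrP v] at hxe
    refine ⟨hPsub n hxP, ?_⟩
    subst hv
    exact hxe
end
end

section
/- Decidability of combinatorial forcing: for every (u,a) ∈ 2^{<ℕ} × 𝒜ℛ and every perfect Q ⊆ 2^ℕ and Y ∈ 𝒮 with [a,Y] ≠ ∅, there exist a perfect M ⊆ Q and X ≤ Y compatible with a such that (M,X) decides (u,a), i.e., (M,X) accepts or rejects (u,a). -/
noncomputable section
open scoped Classical

noncomputable section
open scoped Classical

/-- An abstract Ramsey structure `(ℛ, 𝒮, ≤, ≤⁰, r, s)` with finitizations. -/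
structure RamseyStructure where
  R : Type
  S : Type
  AR : Type
  AS : Type
  le : S → S → Prop
  le0 : R → S → Prop
  r : R → ℕ → AR
  s : S → ℕ → AS
  lenR : AR → ℕ
  lenS : AS → ℕ
  lefin : AS → AS → Prop
  le0fin : AR → AS → Prop

namespace RamseyStructure

variable (σ : RamseyStructure)

def A1 : Prop := (∀ A B, σ.r A 0 = σ.r B 0) ∧ (∀ X Y, σ.s X 0 = σ.s Y 0)

def A2 : Prop := (∀ A B, A ≠ B → ∃ n, σ.r A n ≠ σ.r B n) ∧
  (∀ X Y, X ≠ Y → ∃ n, σ.s X n ≠ σ.s Y n)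

def A3 : Prop :=
  (∀ A B n m, σ.r A n = σ.r B m → n = m ∧ ∀ k, k < n → σ.r A k = σ.r B k) ∧
  (∀ X Y n m, σ.s X n = σ.s Y m → n = m ∧ ∀ k, k < n → σ.s X k = σ.s Y k)

/-- Approximations carry their length. -/
def lenOK : Prop := (∀ A n, σ.lenR (σ.r A n) = n) ∧ (∀ X n, σ.lenS (σ.s X n) = n)

/-- `a ⊑ b` : `b` end-extends `a` (in `𝒜ℛ`). -/
def endExtR (a b : σ.AR) : Prop :=
  ∀ B n, b = σ.r B n → ∃ m, m ≤ σ.lenR b ∧ a = σ.r B m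

/-- `x ⊑ y` : `y` end-extends `x` (in `𝒜𝒮`). -/
def endExtS (x y : σ.AS) : Prop :=
  ∀ Y n, y = σ.s Y n → ∃ m, m ≤ σ.lenS y ∧ x = σ.s Y m

/-- Axiom (A.4) (finitization). -/
def A4 : Prop :=
  (∀ x : σ.AS, {a : σ.AR | σ.le0fin a x}.Finite ∧ {y : σ.AS | σ.lefin y x}.Finite) ∧
  (∀ X Y, σ.le X Y ↔ ∀ n, ∃ m, σ.lefin (σ.s X n) (σ.s Y m)) ∧
  (∀ A X, σ.le0 A X ↔ ∀ n, ∃ m, σ.le0fin (σ.r A n) (σ.s X m)) ∧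
  (∀ a x y, σ.le0fin a x → σ.lefin x y → σ.le0fin a y) ∧
  (∀ a b x, σ.endExtR a b → σ.le0fin b x → ∃ y, σ.endExtS y x ∧ σ.le0fin a y)

/-- `depth_Y(a)`, an integer (`-1` if `a` fits in no approximation of `Y`). -/
noncomputable def depth (a : σ.AR) (Y : σ.S) : ℤ :=
  if ∃ k, σ.le0fin a (σ.s Y k) then (sInf {k | σ.le0fin a (σ.s Y k)} : ℕ) else -1

/-- The basic set `[a, Y] ⊆ ℛ`. -/
def basicR (a : σ.AR) (Y : σ.S) : Set σ.R := {A | σ.le0 A Y ∧ ∃ n, σ.r A n = a}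

/-- The basic set `[x, Y] ⊆ 𝒮`. -/
def basicSx (x : σ.AS) (Y : σ.S) : Set σ.S := {X | σ.le X Y ∧ ∃ n, σ.s X n = x}

/-- The basic set `[n, Y] = [s_n(Y), Y] ⊆ 𝒮`. -/
def basicSn (n : ℕ) (Y : σ.S) : Set σ.S := σ.basicSx (σ.s Y n) Y

/-- Axiom (A.5) (amalgamation). -/
def A5 : Prop := ∀ (a : σ.AR) (Y : σ.S),
  ((0:ℤ) ≤ σ.depth a Y → ∀ X ∈ σ.basicSn (σ.depth a Y).toNat Y, (σ.basicR a X).Nonempty) ∧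
  (∀ X, σ.le X Y → (σ.basicR a X).Nonempty →
    ∃ Y' ∈ σ.basicSn (σ.depth a Y).toNat Y, σ.basicR a Y' ⊆ σ.basicR a X)

/-- Axiom (A.6) (abstract pigeonhole principle). -/
def A6 : Prop := ∀ (a : σ.AR) (O : Set σ.AR) (Y : σ.S), (σ.basicR a Y).Nonempty →
  ∃ X ∈ σ.basicSn (σ.depth a Y).toNat Y,
    (∀ A ∈ σ.basicR a X, σ.r A (σ.lenR a + 1) ∈ O) ∨
    (∀ A ∈ σ.basicR a X, σ.r A (σ.lenR a + 1) ∉ O)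

/-- All the axioms (A.1)–(A.6) together with coherence of lengths. -/
def AxiomsAll : Prop := σ.A1 ∧ σ.A2 ∧ σ.A3 ∧ σ.lenOK ∧ σ.A4 ∧ σ.A5 ∧ σ.A6

/-- `𝒮` is closed in `𝒜𝒮^ℕ` (product of discrete topologies), via `X ↦ (s_n(X))_n`. -/
def SClosed : Prop :=
  letI : TopologicalSpace σ.AS := ⊥
  IsClosed {f : ℕ → σ.AS | ∃ X : σ.S, ∀ n, σ.s X n = f n}

/-- `𝒜ℛ[X] = {b : [b,X] ≠ ∅}`. -/
def ARof (X : σ.S) : Set σ.AR := {b | (σ.basicR b X).Nonempty}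

end RamseyStructure

/-- `x|k`, the length-`k` initial segment of `x ∈ 2^ℕ`. -/
def restrict (x : ℕ → Bool) (k : ℕ) : List Bool := List.ofFn fun i : Fin k => x i

/-- Combinatorial forcing: `(Q,Y)` accepts `(u,a)` (relative to `ℱ`). -/
def accepts (σ : RamseyStructure) (F : Set (List Bool × σ.AR)) (Q : Set (ℕ → Bool))
    (Y : σ.S) (u : List Bool) (a : σ.AR) : Prop :=
  ∀ x ∈ piece Q u, ∀ B ∈ σ.basicR a Y, ∃ k m : ℕ, (restrict x k, σ.r B m) ∈ F

/-- `(Q,Y)` rejects `(u,a)`: no `(M,X)` with `M` perfect `⊆ Q(u)`, `X ≤ Y`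
compatible with `a`, accepts `(u,a)`. -/
def rejects (σ : RamseyStructure) (F : Set (List Bool × σ.AR)) (Q : Set (ℕ → Bool))
    (Y : σ.S) (u : List Bool) (a : σ.AR) : Prop :=
  ∀ M : Set (ℕ → Bool), PerfectSet M → M ⊆ piece Q u →
    ∀ X : σ.S, σ.le X Y → (σ.basicR a X).Nonempty → ¬ accepts σ F M X u a

/-- `(Q,Y)` decides `(u,a)`: it accepts or rejects it. -/
def decides (σ : RamseyStructure) (F : Set (List Bool × σ.AR)) (Q : Set (ℕ → Bool))
    (Y : σ.S) (u : List Bool) (a : σ.AR) : Prop :=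
  accepts σ F Q Y u a ∨ rejects σ F Q Y u a

/-- If `[a,Y] ≠ ∅`, then `Y ≤ Y`. This follows from the axioms: by (A.6) there are
`X ≤ Y` agreeing with `Y` up to arbitrarily large depths, which forces
`lefin (s Y j) (s Y m)` for every `j`, hence `Y ≤ Y` by (A.4). -/
lemma le_self_of_compat (σ : RamseyStructure) (hax : σ.AxiomsAll) (a : σ.AR) (Y : σ.S)
    (haY : (σ.basicR a Y).Nonempty) : σ.le Y Y := by
  obtain ⟨A, hA0, n₀, hrn₀⟩ := haY
  obtain ⟨hA1, hA2, hA3, hlen, hA4, hA5, hA6⟩ := hax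
  have hle0 : ∀ n, ∃ m, σ.le0fin (σ.r A n) (σ.s Y m) := (hA4.2.2.1 A Y).1 hA0
  rw [hA4.2.1 Y Y]
  intro j
  -- find `n` such that `r A n` has depth `> j` in `Y`
  have hfin : (⋃ k ∈ Finset.range (j + 1), {b : σ.AR | σ.le0fin b (σ.s Y k)}).Finite :=
    Set.Finite.biUnion (Finset.range (j + 1)).finite_toSet
      (fun k _ => (hA4.1 (σ.s Y k)).1)
  have hinj : Function.Injective (fun n => σ.r A n) :=
    fun n m h => (hA3.1 A A n m h).1
  have hbig : ∃ n, ∀ k, k ≤ j → ¬ σ.le0fin (σ.r A n) (σ.s Y k) := by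
    by_contra h
    push_neg at h
    have hsub : Set.range (fun n => σ.r A n) ⊆
        ⋃ k ∈ Finset.range (j + 1), {b : σ.AR | σ.le0fin b (σ.s Y k)} := by
      rintro b ⟨n, rfl⟩
      obtain ⟨k, hk, hkle⟩ := h n
      exact Set.mem_biUnion (Finset.mem_range.2 (Nat.lt_succ_of_le hk)) hkle
    exact Set.infinite_range_of_injective hinj (hfin.subset hsub)
  obtain ⟨n, hn⟩ := hbig
  set b := σ.r A n with hb
  have hbY : (σ.basicR b Y).Nonempty := ⟨A, hA0, n, rfl⟩
  have hS : ∃ k, σ.le0fin b (σ.s Y k) := hle0 n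
  set d := sInf {k | σ.le0fin b (σ.s Y k)} with hdd
  have hdS : σ.le0fin b (σ.s Y d) := Nat.sInf_mem hS
  have hdj : j < d := lt_of_not_ge fun h => hn d h hdS
  have hdt : (σ.depth b Y).toNat = d := by
    rw [RamseyStructure.depth, if_pos hS]
    exact Int.toNat_natCast d
  obtain ⟨X, hX, -⟩ := hA6 b ∅ Y hbY
  rw [hdt] at hX
  obtain ⟨hXY, n', hsn⟩ := hX
  obtain ⟨hnd, hagree⟩ := hA3.2 X Y n' d hsn
  have hXYj : σ.s X j = σ.s Y j := hagree j (by omega)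
  obtain ⟨m, hm⟩ := (hA4.2.1 X Y).1 hXY j
  exact ⟨m, hXYj ▸ hm⟩

/-- Decidability of combinatorial forcing: some `(M,X)` with `M` perfect `⊆ Q`
and `X ≤ Y` compatible with `a` decides `(u,a)`. -/
theorem stmt6 (σ : RamseyStructure) (hax : σ.AxiomsAll)
    (F : Set (List Bool × σ.AR)) (u : List Bool) (a : σ.AR)
    (Q : Set (ℕ → Bool)) (hQ : PerfectSet Q) (Y : σ.S) (haY : (σ.basicR a Y).Nonempty) :
    ∃ M : Set (ℕ → Bool), PerfectSet M ∧ M ⊆ Q ∧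
      ∃ X : σ.S, σ.le X Y ∧ (σ.basicR a X).Nonempty ∧ decides σ F M X u a := by
  have hleYY : σ.le Y Y := le_self_of_compat σ hax a Y haY
  by_cases hrej : rejects σ F Q Y u a
  · exact ⟨Q, hQ, subset_rfl, Y, hleYY, haY, Or.inr hrej⟩
  · rw [rejects] at hrej
    push_neg at hrej
    obtain ⟨M, hM, hMQ, X, hXY, hXne, hacc⟩ := hrej
    exact ⟨M, hM, fun x hx => (hMQ hx).1, X, hXY, hXne, Or.inl hacc⟩
end
end
end

section
/- Marczewski's theorem: if 𝒜 is a σ-algebra of subsets of a set X and 𝒜₀ ⊆ 𝒜 is a σ-ideal such that (𝒜, 𝒜₀) is a Marczewski pair, then 𝒜 is closed under the Souslin operation: for every Souslin scheme (A_s)_{s ∈ ℕ^{<ℕ}} with all A_s ∈ 𝒜, the set ⋃_{f ∈ ℕ^ℕ} ⋂_{n} A_{f|n} belongs to 𝒜. -/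
def seqCons (k : ℕ) (g : ℕ → ℕ) : ℕ → ℕ
  | 0 => k
  | n+1 => g n

def extSeq (s : List ℕ) (f : ℕ → ℕ) : ℕ → ℕ := fun i =>
  if h : i < s.length then s[i] else f (i - s.length)

lemma extSeq_nil (f : ℕ → ℕ) : extSeq [] f = f := by
  funext i; simp [extSeq]

lemma extSeq_full (s : List ℕ) (f : ℕ → ℕ) :
    (List.ofFn fun i : Fin s.length => extSeq s f i) = s := by
  simp [extSeq]

lemma extSeq_append (s : List ℕ) (k : ℕ) (g : ℕ → ℕ) :
    extSeq (s ++ [k]) g = extSeq s (seqCons k g) := by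
  funext i
  rcases lt_trichotomy i s.length with h | h | h
  · simp only [extSeq, List.length_append, List.length_singleton]
    rw [dif_pos (by omega), dif_pos h]
    rw [List.getElem_append_left h]
  · subst h
    simp only [extSeq, List.length_append, List.length_singleton]
    rw [dif_pos (by omega), dif_neg (by omega)]
    rw [List.getElem_append_right (by omega)]
    simp [seqCons]
  · simp only [extSeq, List.length_append, List.length_singleton]
    rw [dif_neg (by omega), dif_neg (by omega)]
    have : i - s.length = (i - (s.length + 1)) + 1 := by omega
    rw [this]
    rfl

lemma ofFn_concat (f : ℕ → ℕ) (n : ℕ) :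
    (List.ofFn fun i : Fin (n+1) => f i) =
      (List.ofFn fun i : Fin n => f i) ++ [f n] := by
  rw [List.ofFn_succ']
  simp [List.concat_eq_append, Fin.castSucc]

/-- Marczewski's theorem: a σ-algebra `𝒜` which together with a σ-ideal
`𝒜₀ ⊆ 𝒜` forms a Marczewski pair is closed under the Souslin operation. -/
theorem stmt15 {X : Type} (𝒜 𝒜₀ : Set (Set X))
    (hUniv : Set.univ ∈ 𝒜)
    (hCompl : ∀ B ∈ 𝒜, Bᶜ ∈ 𝒜)
    (hUnion : ∀ g : ℕ → Set X, (∀ n, g n ∈ 𝒜) → (⋃ n, g n) ∈ 𝒜)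
    (hIdealSub : 𝒜₀ ⊆ 𝒜)
    (hIdealDown : ∀ B ∈ 𝒜₀, ∀ C, C ⊆ B → C ∈ 𝒜₀)
    (hIdealUnion : ∀ g : ℕ → Set X, (∀ n, g n ∈ 𝒜₀) → (⋃ n, g n) ∈ 𝒜₀)
    (hMarc : ∀ A : Set X, ∃ Φ ∈ 𝒜, A ⊆ Φ ∧ ∀ B, B ⊆ Φ \ A → B ∈ 𝒜 → B ∈ 𝒜₀)
    (scheme : List ℕ → Set X) (hscheme : ∀ s, scheme s ∈ 𝒜) :
    (⋃ f : ℕ → ℕ, ⋂ n : ℕ, scheme (List.ofFn fun i : Fin n => f i)) ∈ 𝒜 := by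
  classical
  -- binary intersection closure
  have hInter2 : ∀ B ∈ 𝒜, ∀ C ∈ 𝒜, B ∩ C ∈ 𝒜 := by
    intro B hB C hC
    have hEq : B ∩ C = (⋃ n : ℕ, if n = 0 then Bᶜ else Cᶜ)ᶜ := by
      ext x
      simp only [Set.mem_inter_iff, Set.mem_compl_iff, Set.mem_iUnion]
      constructor
      · rintro ⟨hb, hc⟩ ⟨n, hn⟩
        split at hn <;> [exact hn hb; exact hn hc]
      · intro h
        constructor
        · by_contra hb; exact h ⟨0, by simp [hb]⟩
        · by_contra hc; exact h ⟨1, by simp [hc]⟩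
    rw [hEq]
    exact hCompl _ (hUnion _ (fun n => by
      split <;> [exact hCompl _ hB; exact hCompl _ hC]))
  have hDiff : ∀ B ∈ 𝒜, ∀ C ∈ 𝒜, B \ C ∈ 𝒜 := by
    intro B hB C hC
    rw [Set.diff_eq]
    exact hInter2 _ hB _ (hCompl _ hC)
  -- the partial Souslin sets
  set K : List ℕ → Set X := fun s =>
    ⋃ f : ℕ → ℕ, ⋂ n : ℕ, scheme (List.ofFn fun i : Fin n => extSeq s f i) with hK
  -- K [] is the goal set
  have hKnil : K [] = ⋃ f : ℕ → ℕ, ⋂ n : ℕ, scheme (List.ofFn fun i : Fin n => f i) := by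
    simp only [hK, extSeq_nil]
  -- K s ⊆ scheme s
  have hKsub : ∀ s, K s ⊆ scheme s := by
    intro s x hx
    simp only [hK, Set.mem_iUnion, Set.mem_iInter] at hx
    obtain ⟨f, hf⟩ := hx
    have := hf s.length
    rwa [extSeq_full] at this
  -- K s ⊆ ⋃ k, K (s ++ [k])
  have hKstep : ∀ s, K s ⊆ ⋃ k : ℕ, K (s ++ [k]) := by
    intro s x hx
    simp only [hK, Set.mem_iUnion, Set.mem_iInter] at hx ⊢
    obtain ⟨f, hf⟩ := hx
    refine ⟨f 0, fun n => f (n + 1), fun n => ?_⟩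
    rw [extSeq_append]
    have hfc : seqCons (f 0) (fun n => f (n + 1)) = f := by
      funext i; cases i <;> rfl
    rw [hfc]
    exact hf n
  -- Marczewski hulls
  choose Φ₀ hΦ₀A hΦ₀sub hΦ₀rem using fun s => hMarc (K s)
  set Φ : List ℕ → Set X := fun s => Φ₀ s ∩ scheme s with hΦdef
  have hΦA : ∀ s, Φ s ∈ 𝒜 := fun s => hInter2 _ (hΦ₀A s) _ (hscheme s)
  have hΦsub : ∀ s, K s ⊆ Φ s := fun s => Set.subset_inter (hΦ₀sub s) (hKsub s)
  have hΦscheme : ∀ s, Φ s ⊆ scheme s := fun s => Set.inter_subset_right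
  -- the small remainders
  set D : List ℕ → Set X := fun s => Φ s \ ⋃ k : ℕ, Φ (s ++ [k]) with hDdef
  have hDA : ∀ s, D s ∈ 𝒜 :=
    fun s => hDiff _ (hΦA s) _ (hUnion _ fun k => hΦA (s ++ [k]))
  have hD0 : ∀ s, D s ∈ 𝒜₀ := by
    intro s
    refine hΦ₀rem s _ (fun x hx => ?_) (hDA s)
    obtain ⟨⟨hx1, _⟩, hx2⟩ := hx
    refine ⟨hx1, fun hxK => hx2 ?_⟩
    obtain ⟨_, ⟨k, rfl⟩, hk⟩ := hKstep s hxK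
    exact Set.mem_iUnion.2 ⟨k, hΦsub _ hk⟩
  -- total union of remainders
  have e : ℕ ≃ List ℕ := (Denumerable.eqv (List ℕ)).symm
  have hDU0 : (⋃ n : ℕ, D (e n)) ∈ 𝒜₀ := hIdealUnion _ fun n => hD0 (e n)
  have hDUeq : (⋃ n : ℕ, D (e n)) = ⋃ s : List ℕ, D s := e.iSup_comp (g := fun s => D s)
  have hDU : (⋃ s : List ℕ, D s) ∈ 𝒜₀ := hDUeq ▸ hDU0
  -- main claim : Φ [] \ ⋃ D ⊆ K []
  have hmain : Φ [] \ (⋃ s : List ℕ, D s) ⊆ K [] := by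
    rintro x ⟨hx0, hxD⟩
    have step : ∀ s, x ∈ Φ s → ∃ k, x ∈ Φ (s ++ [k]) := by
      intro s hs
      by_contra h
      push_neg at h
      exact hxD (Set.mem_iUnion.2 ⟨s, hs, fun hu => by
        obtain ⟨_, ⟨k, rfl⟩, hk⟩ := hu
        exact h k hk⟩)
    -- build the branch
    let F : ℕ → {s : List ℕ // x ∈ Φ s} := fun n =>
      Nat.rec ⟨[], hx0⟩
        (fun _ p => ⟨p.1 ++ [Classical.choose (step p.1 p.2)],
          Classical.choose_spec (step p.1 p.2)⟩) n
    let f : ℕ → ℕ := fun n => Classical.choose (step (F n).1 (F n).2)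
    have hFsucc : ∀ n, (F (n+1)).1 = (F n).1 ++ [f n] := fun n => rfl
    have hFeq : ∀ n, (F n).1 = List.ofFn fun i : Fin n => f i := by
      intro n
      induction n with
      | zero => rfl
      | succ n ih => rw [hFsucc, ih, ofFn_concat]
    rw [hKnil]
    refine Set.mem_iUnion.2 ⟨f, Set.mem_iInter.2 fun n => ?_⟩
    have := (F n).2
    rw [hFeq n] at this
    exact hΦscheme _ this
  -- conclude
  have hrem : Φ [] \ K [] ∈ 𝒜₀ := by
    refine hIdealDown _ hDU _ (fun x hx => ?_)
    by_contra hxD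
    exact hx.2 (hmain ⟨hx.1, hxD⟩)
  have hKeq : K [] = Φ [] \ (Φ [] \ K []) := by
    rw [Set.diff_diff_right, Set.diff_self, Set.empty_union]
    exact (Set.inter_eq_right.2 (hΦsub [])).symm
  rw [← hKnil, hKeq]
  exact hDiff _ (hΦA []) _ (hIdealSub hrem)
end
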